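/- arXiv:1311.6186 — 2 statements merged into one kernel-verified Lean document; each statement's English description precedes it below -/
import Mathlib

section
/- Let A be a p₁×p₂ real matrix with first and second singular values l₁ > l₂ ≥ 0, first pair of singular vectors (u, v), and let β ∈ ℝ^{p₂} be a unit vector. Define ᾱ = Aβ and suppose ᾱ ≠ 0. Then sin²∠(ᾱ, u) ≤ (sin²∠(β, v) / cos²∠(β, v)) · (l₂/l₁)². -/
open Finset Matrix

/-- One-step contraction of the power method for singular vectors: if `(u, v)` is the first
pair of singular vectors of `A` with singular values `l₁ > l₂ ≥ 0` (so that `A v = l₁ u`,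
and on the orthogonal complement of `v` the image of `A` is orthogonal to `u` and contracted
by `l₂`), then for a unit vector `β` with `ᾱ = Aβ ≠ 0`,
`sin²∠(ᾱ, u) ≤ (sin²∠(β,v)/cos²∠(β,v)) (l₂/l₁)²`. -/
theorem power_method_one_step (p₁ p₂ : ℕ) (A : Matrix (Fin p₁) (Fin p₂) ℝ)
    (l₁ l₂ : ℝ) (hl : l₂ < l₁) (hl2 : 0 ≤ l₂)
    (u : Fin p₁ → ℝ) (v : Fin p₂ → ℝ)
    (hu : ∑ i, u i ^ 2 = 1) (hv : ∑ i, v i ^ 2 = 1)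
    (hAv : A.mulVec v = l₁ • u)
    (hAperp : ∀ x : Fin p₂ → ℝ, (∑ i, x i * v i) = 0 →
      (∑ i, (A.mulVec x) i * u i) = 0 ∧ (∑ i, (A.mulVec x) i ^ 2) ≤ l₂ ^ 2 * ∑ i, x i ^ 2)
    (β : Fin p₂ → ℝ) (hβ : ∑ i, β i ^ 2 = 1)
    (hβv : (∑ i, β i * v i) ≠ 0)
    (hα : A.mulVec β ≠ 0) :
    1 - (∑ i, (A.mulVec β) i * u i) ^ 2 / ((∑ i, (A.mulVec β) i ^ 2) * ∑ i, u i ^ 2)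
      ≤ ((1 - (∑ i, β i * v i) ^ 2 / ((∑ i, β i ^ 2) * ∑ i, v i ^ 2)) /
          ((∑ i, β i * v i) ^ 2 / ((∑ i, β i ^ 2) * ∑ i, v i ^ 2))) * (l₂ / l₁) ^ 2 := by
  have hl1 : 0 < l₁ := lt_of_le_of_lt hl2 hl
  set c : ℝ := ∑ i, β i * v i with hc
  set w : Fin p₂ → ℝ := fun i => β i - c * v i with hw
  have hwv : (∑ i, w i * v i) = 0 := by
    have : (∑ i, w i * v i) = (∑ i, β i * v i) - c * ∑ i, v i ^ 2 := by
      rw [Finset.mul_sum, ← Finset.sum_sub_distrib]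
      congr 1; ext i; simp [hw]; ring
    rw [this, hv, ← hc]; ring
  obtain ⟨h1, h2⟩ := hAperp w hwv
  have hβeq : β = c • v + w := by funext i; simp [hw]
  have key : ∀ i, A.mulVec β i = c * l₁ * u i + A.mulVec w i := by
    intro i
    rw [hβeq, Matrix.mulVec_add, Matrix.mulVec_smul, hAv]
    simp [mul_assoc]
  set S : ℝ := ∑ i, (A.mulVec w) i ^ 2 with hS
  have hS0 : 0 ≤ S := Finset.sum_nonneg fun i _ => sq_nonneg _
  have Sw2 : (∑ i, w i ^ 2) = 1 - c ^ 2 := by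
    have expand : ∀ i, w i ^ 2 = β i ^ 2 - 2 * c * (β i * v i) + c ^ 2 * v i ^ 2 :=
      fun i => by simp only [hw]; ring
    calc (∑ i, w i ^ 2) = ∑ i, (β i ^ 2 - 2 * c * (β i * v i) + c ^ 2 * v i ^ 2) := by
          simp only [expand]
      _ = (∑ i, β i ^ 2) - 2 * c * (∑ i, β i * v i) + c ^ 2 * ∑ i, v i ^ 2 := by
          rw [Finset.sum_add_distrib, Finset.sum_sub_distrib, ← Finset.mul_sum, ← Finset.mul_sum]
      _ = 1 - c ^ 2 := by rw [hβ, hv, ← hc]; ring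
  have Sαu : (∑ i, (A.mulVec β) i * u i) = c * l₁ := by
    have : (∑ i, (A.mulVec β) i * u i)
        = c * l₁ * (∑ i, u i ^ 2) + ∑ i, (A.mulVec w) i * u i := by
      rw [Finset.mul_sum, ← Finset.sum_add_distrib]
      congr 1; ext i; rw [key i]; ring
    rw [this, hu, h1]; ring
  have Sα2 : (∑ i, (A.mulVec β) i ^ 2) = (c * l₁) ^ 2 + S := by
    have : (∑ i, (A.mulVec β) i ^ 2)
        = (c * l₁) ^ 2 * (∑ i, u i ^ 2) + 2 * (c * l₁) * (∑ i, (A.mulVec w) i * u i) + S := by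
      rw [hS, Finset.mul_sum, Finset.mul_sum, ← Finset.sum_add_distrib, ← Finset.sum_add_distrib]
      congr 1; ext i; rw [key i]; ring
    rw [this, hu, h1]; ring
  have h3 : S ≤ l₂ ^ 2 * (1 - c ^ 2) := by rw [← Sw2]; exact h2
  have hc2 : 0 < c ^ 2 := lt_of_le_of_ne (sq_nonneg c) (Ne.symm (pow_ne_zero 2 hβv))
  rw [Sαu, Sα2, hu, hβ, hv]
  simp only [mul_one, one_mul, div_one]
  have hD : 0 < (c * l₁) ^ 2 + S := by positivity
  have hE : 1 - (c * l₁) ^ 2 / ((c * l₁) ^ 2 + S) = S / ((c * l₁) ^ 2 + S) := by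
    field_simp
    ring
  rw [hE]
  have hRHS : (1 - c ^ 2) / c ^ 2 * (l₂ / l₁) ^ 2
      = ((1 - c ^ 2) * l₂ ^ 2) / (c ^ 2 * l₁ ^ 2) := by
    field_simp
  rw [hRHS, div_le_div_iff₀ hD (by positivity)]
  have h1c : 0 ≤ 1 - c ^ 2 := by nlinarith [hS0, h3, sq_nonneg l₂, Sw2, Finset.sum_nonneg (fun i (_ : i ∈ Finset.univ) => sq_nonneg (w i))]
  nlinarith [h3, hS0, mul_nonneg (mul_nonneg h1c (sq_nonneg l₂)) hS0, sq_nonneg (c*l₁)]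
end

section
/- For i = 1, 2, let θ_i ∈ ℝ^{p₁} and η_i ∈ ℝ^{p₂} be unit vectors, 0 < λ < 1, and let P_i be the distribution of n i.i.d. observations from N(0, Σ_i) with Σ_i = [[I_{p₁}, λθ_iη_i^T], [λη_iθ_i^T, I_{p₂}]]. Then the Kullback–Leibler divergence satisfies K(P₁, P₂) ≤ (nλ²/(2(1−λ²)))(‖θ₁ − θ₂‖² + ‖η₁ − η₂‖²). -/
open Finset Matrix


lemma vmv_mul {a b c : ℕ} (x : Fin a → ℝ) (y z : Fin b → ℝ) (w : Fin c → ℝ) :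
    vecMulVec x y * vecMulVec z w = (y ⬝ᵥ z) • vecMulVec x w := by
  ext i j
  simp only [mul_apply, vecMulVec_apply, Matrix.smul_apply, dotProduct, smul_eq_mul, Finset.sum_mul]
  exact Finset.sum_congr rfl fun k _ => by ring

lemma trace_vmv {a : ℕ} (x y : Fin a → ℝ) : (vecMulVec x y).trace = x ⬝ᵥ y := by
  simp [Matrix.trace, vecMulVec_apply, dotProduct, Matrix.diag]

lemma trace_fromBlocks' {a b : ℕ} (A : Matrix (Fin a) (Fin a) ℝ) (B C)
    (D : Matrix (Fin b) (Fin b) ℝ) :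
    (fromBlocks A B C D).trace = A.trace + D.trace := by
  simp [Matrix.trace, Fintype.sum_sum_type, Matrix.diag]

lemma det_one_sub_smul_vmv {k : ℕ} (c : ℝ) (u : Fin k → ℝ) :
    (1 - c • vecMulVec u u).det = 1 - c * (u ⬝ᵥ u) := by
  have h : (1 : Matrix (Fin k) (Fin k) ℝ) - c • vecMulVec u u
      = 1 + replicateCol Unit ((-c) • u) * replicateRow Unit u := by
    rw [vecMulVec_eq Unit]
    ext i j
    simp [mul_apply, mul_comm, mul_left_comm, sub_eq_add_neg]
  rw [h, det_one_add_replicateCol_mul_replicateRow]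
  simp only [dotProduct, Pi.smul_apply, smul_eq_mul, Finset.mul_sum]
  rw [sub_eq_add_neg, ← Finset.sum_neg_distrib]
  exact congrArg _ (Finset.sum_congr rfl fun i _ => by ring)

set_option maxHeartbeats 1000000 in
/-- KL divergence bound between the two Gaussian models of the minimax lower bound: with
`Σ_i = [[I, λθ_iη_iᵀ],[λη_iθ_iᵀ, I]]` and `P_i` the law of `n` i.i.d. draws of `N(0, Σ_i)`,
using the Gaussian formula `K(P₁,P₂) = (n/2)[tr(Σ₂⁻¹Σ₁) - p - log det(Σ₂⁻¹Σ₁)]`, we have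
`K(P₁,P₂) ≤ (nλ²/(2(1-λ²)))(‖θ₁-θ₂‖² + ‖η₁-η₂‖²)`. -/
theorem kl_bound_gaussian_pair (p₁ p₂ n : ℕ)
    (θ₁ θ₂ : Fin p₁ → ℝ) (η₁ η₂ : Fin p₂ → ℝ)
    (hθ₁ : ∑ i, θ₁ i ^ 2 = 1) (hθ₂ : ∑ i, θ₂ i ^ 2 = 1)
    (hη₁ : ∑ i, η₁ i ^ 2 = 1) (hη₂ : ∑ i, η₂ i ^ 2 = 1)
    (lam : ℝ) (hlam0 : 0 < lam) (hlam1 : lam < 1) :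
    (n : ℝ) / 2 *
        (((Matrix.fromBlocks 1 (lam • Matrix.vecMulVec θ₂ η₂)
              (lam • Matrix.vecMulVec η₂ θ₂) (1 : Matrix (Fin p₂) (Fin p₂) ℝ))⁻¹ *
            Matrix.fromBlocks 1 (lam • Matrix.vecMulVec θ₁ η₁)
              (lam • Matrix.vecMulVec η₁ θ₁) 1).trace
          - (p₁ + p₂ : ℝ)
          - Real.log ((Matrix.fromBlocks 1 (lam • Matrix.vecMulVec θ₂ η₂)
              (lam • Matrix.vecMulVec η₂ θ₂) (1 : Matrix (Fin p₂) (Fin p₂) ℝ))⁻¹ *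
            Matrix.fromBlocks 1 (lam • Matrix.vecMulVec θ₁ η₁)
              (lam • Matrix.vecMulVec η₁ θ₁) 1).det)
      ≤ (n : ℝ) * lam ^ 2 / (2 * (1 - lam ^ 2)) *
          ((∑ i, (θ₁ i - θ₂ i) ^ 2) + ∑ i, (η₁ i - η₂ i) ^ 2) := by
  have hd : (0:ℝ) < 1 - lam ^ 2 := by nlinarith
  have dθ₂ : θ₂ ⬝ᵥ θ₂ = 1 := by simpa [dotProduct, sq] using hθ₂
  have dη₂ : η₂ ⬝ᵥ η₂ = 1 := by simpa [dotProduct, sq] using hη₂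
  set a : ℝ := lam / (1 - lam ^ 2) with ha
  set b : ℝ := lam ^ 2 / (1 - lam ^ 2) with hb
  set A₂ := Matrix.fromBlocks 1 (lam • Matrix.vecMulVec θ₂ η₂)
      (lam • Matrix.vecMulVec η₂ θ₂) (1 : Matrix (Fin p₂) (Fin p₂) ℝ) with hA₂
  set A₁ := Matrix.fromBlocks 1 (lam • Matrix.vecMulVec θ₁ η₁)
      (lam • Matrix.vecMulVec η₁ θ₁) (1 : Matrix (Fin p₂) (Fin p₂) ℝ) with hA₁
  set B : Matrix (Fin p₁ ⊕ Fin p₂) (Fin p₁ ⊕ Fin p₂) ℝ :=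
    Matrix.fromBlocks (1 + b • Matrix.vecMulVec θ₂ θ₂) ((-a) • Matrix.vecMulVec θ₂ η₂)
      ((-a) • Matrix.vecMulVec η₂ θ₂) (1 + b • Matrix.vecMulVec η₂ η₂) with hB
  have hc1 : b + lam * -a = 0 := by rw [ha, hb]; field_simp; ring
  have hc2 : -a + lam + lam * b = 0 := by rw [ha, hb]; field_simp; ring
  -- A₂ * B = 1
  have hAB : A₂ * B = 1 := by
    rw [hA₂, hB, fromBlocks_multiply, ← fromBlocks_one, fromBlocks_inj]
    refine ⟨?_, ?_, ?_, ?_⟩ <;>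
      simp only [Matrix.one_mul, Matrix.mul_one, Matrix.smul_mul, Matrix.mul_smul,
        Matrix.mul_add, Matrix.add_mul, vmv_mul, dη₂, dθ₂, one_smul, smul_smul] <;>
      match_scalars <;> linarith [hc1, hc2]
  have hInv : A₂⁻¹ = B := Matrix.inv_eq_right_inv hAB
  have dθ₁ : θ₁ ⬝ᵥ θ₁ = 1 := by simpa [dotProduct, sq] using hθ₁
  have dη₁ : η₁ ⬝ᵥ η₁ = 1 := by simpa [dotProduct, sq] using hη₁
  set s : ℝ := θ₂ ⬝ᵥ θ₁ with hs
  set t : ℝ := η₂ ⬝ᵥ η₁ with ht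
  have hdet1 : A₁.det = 1 - lam ^ 2 := by
    rw [hA₁, det_fromBlocks_one₁₁, Matrix.smul_mul, Matrix.mul_smul, vmv_mul, dθ₁, one_smul,
      smul_smul, show lam * lam = lam ^ 2 by ring, det_one_sub_smul_vmv, dη₁, mul_one]
  have hdet2 : A₂.det = 1 - lam ^ 2 := by
    rw [hA₂, det_fromBlocks_one₁₁, Matrix.smul_mul, Matrix.mul_smul, vmv_mul, dθ₂, one_smul,
      smul_smul, show lam * lam = lam ^ 2 by ring, det_one_sub_smul_vmv, dη₂, mul_one]
  have hdet : (A₂⁻¹ * A₁).det = 1 := by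
    rw [det_mul, Matrix.det_nonsing_inv, hdet1, hdet2, Ring.inverse_eq_inv,
      inv_mul_cancel₀ hd.ne']
  have hT : (A₂⁻¹ * A₁).trace = ((p₁ : ℝ) + p₂) + 2 * b - 2 * (a * lam) * (s * t) := by
    rw [hInv, hB, hA₁, fromBlocks_multiply, trace_fromBlocks']
    simp only [Matrix.mul_one, Matrix.one_mul, Matrix.smul_mul, Matrix.mul_smul, smul_smul,
      vmv_mul, Matrix.add_mul, Matrix.mul_add, trace_add, trace_smul, trace_one, trace_vmv,
      smul_eq_mul, Fintype.card_fin, dθ₂, dη₂, ← hs, ← ht]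
    ring
  have hsum1 : ∑ i, (θ₁ i - θ₂ i) ^ 2 = 2 - 2 * s := by
    have h1 : s = ∑ i, θ₂ i * θ₁ i := rfl
    calc ∑ i, (θ₁ i - θ₂ i) ^ 2
        = ∑ i, θ₁ i ^ 2 + ∑ i, θ₂ i ^ 2 - 2 * ∑ i, θ₂ i * θ₁ i := by
          rw [← Finset.sum_add_distrib, Finset.mul_sum, ← Finset.sum_sub_distrib]
          exact Finset.sum_congr rfl fun i _ => by ring
      _ = 2 - 2 * s := by rw [hθ₁, hθ₂, ← h1]; ring
  have hsum2 : ∑ i, (η₁ i - η₂ i) ^ 2 = 2 - 2 * t := by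
    have h1 : t = ∑ i, η₂ i * η₁ i := rfl
    calc ∑ i, (η₁ i - η₂ i) ^ 2
        = ∑ i, η₁ i ^ 2 + ∑ i, η₂ i ^ 2 - 2 * ∑ i, η₂ i * η₁ i := by
          rw [← Finset.sum_add_distrib, Finset.mul_sum, ← Finset.sum_sub_distrib]
          exact Finset.sum_congr rfl fun i _ => by ring
      _ = 2 - 2 * t := by rw [hη₁, hη₂, ← h1]; ring
  have hs1 : s ≤ 1 := by
    have := Finset.sum_mul_sq_le_sq_mul_sq Finset.univ θ₂ θ₁
    rw [hθ₁, hθ₂] at this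
    have h1 : s = ∑ i, θ₂ i * θ₁ i := rfl
    nlinarith [sq_nonneg (s - 1)]
  have ht1 : t ≤ 1 := by
    have := Finset.sum_mul_sq_le_sq_mul_sq Finset.univ η₂ η₁
    rw [hη₁, hη₂] at this
    have h1 : t = ∑ i, η₂ i * η₁ i := rfl
    nlinarith [sq_nonneg (t - 1)]
  have hn : (0:ℝ) ≤ n := Nat.cast_nonneg n
  rw [hT, hdet, Real.log_one, hsum1, hsum2, ha, hb]
  have key : (0:ℝ) ≤ (n:ℝ) * lam ^ 2 * (1 - lam ^ 2) * ((1 - s) * (1 - t)) :=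
    mul_nonneg (mul_nonneg (mul_nonneg hn (sq_nonneg lam)) hd.le)
      (mul_nonneg (by linarith) (by linarith))
  have h2 : (0:ℝ) < 2 * (1 - lam ^ 2) := by linarith
  have hne : (1:ℝ) - lam ^ 2 ≠ 0 := hd.ne'
  have hL : (n:ℝ)/2 * ((p₁:ℝ) + (p₂:ℝ) + 2*(lam^2/(1-lam^2)) - 2*(lam/(1-lam^2)*lam)*(s*t)
        - ((p₁:ℝ)+(p₂:ℝ)) - 0)
      = (n:ℝ) * lam^2 * (1 - s*t) / (1-lam^2) := by
    field_simp
    ring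
  have hR : (n:ℝ)*lam^2/(2*(1-lam^2)) * (2-2*s+(2-2*t))
      = (n:ℝ)*lam^2*(4-2*s-2*t)/(2*(1-lam^2)) := by ring
  rw [hL, hR, div_le_div_iff₀ hd h2]
  nlinarith [key]
end
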